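/- arXiv:1304.3040 — 2 statements merged into one kernel-verified Lean document; each statement's English description precedes it below -/
import Mathlib

section
/- For a grafting function φ : [0,s_0] → [0,s_1] with data (X^±, δ^±), a point t ∈ (0, s_0) belongs to X^+ if and only if the right jump ω^+(t) = lim_{h→0+} (φ(t+h) − φ(t)) is positive, in which case δ^+(t) = ω^+(t); similarly t ∈ X^- if and only if the left jump ω^-(t) = lim_{h→0+} (φ(t) − φ(t−h)) is positive, in which case δ^-(t) = ω^-(t). Consequently the data (X^±, δ^±) is uniquely determined by φ. -/
open Set Filter

/-- `(Xp, Xm, δp, δm)` is grafting data for `φ : [0, s₀] → [0, s₁]`: `Xp ⊆ [0, s₀)` and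
`Xm ⊆ [0, s₀]` are countable, `δp, δm` are positive and summable on them, and
`φ(t) = t + ∑_{x < t, x ∈ Xp} δp(x) + ∑_{x ≤ t, x ∈ Xm} δm(x)` for `t ∈ [0, s₀]`,
with `φ` mapping `[0, s₀]` into `[0, s₁]`. -/
def IsGraftingData (s₀ s₁ : ℝ) (φ : ℝ → ℝ) (Xp Xm : Set ℝ) (δp δm : ℝ → ℝ) : Prop :=
  Xp.Countable ∧ Xm.Countable ∧
  Xp ⊆ Ico 0 s₀ ∧ Xm ⊆ Icc 0 s₀ ∧
  (∀ x ∈ Xp, 0 < δp x) ∧ (∀ x ∈ Xm, 0 < δm x) ∧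
  Summable (fun x : Xp => δp x) ∧ Summable (fun x : Xm => δm x) ∧
  (∀ t ∈ Icc 0 s₀,
    φ t = t + (∑' x : ↥(Xp ∩ Iio t), δp x) + (∑' x : ↥(Xm ∩ Iic t), δm x)) ∧
  (∀ t ∈ Icc 0 s₀, φ t ∈ Icc 0 s₁)

/-- Summability over a subtype passes to intersections. -/
lemma graft_aux_summable_inter {S A : Set ℝ} {f : ℝ → ℝ}
    (h : Summable fun x : S => f x) : Summable fun x : ↥(S ∩ A) => f x := by
  have h1 : Summable (S.indicator f) := summable_subtype_iff_indicator.mp h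
  have h2 : Summable ((S ∩ A).indicator f) := by
    rw [Set.inter_comm, ← Set.indicator_indicator]
    exact h1.indicator A
  exact summable_subtype_iff_indicator.mpr h2

/-- Sum over a set intersected with a disjoint union splits. -/
lemma graft_aux_tsum_split {S A B : Set ℝ} {f : ℝ → ℝ} (hAB : Disjoint A B)
    (hsum : Summable fun x : S => f x) :
    ∑' x : ↥(S ∩ (A ∪ B)), f x
      = (∑' x : ↥(S ∩ A), f x) + ∑' x : ↥(S ∩ B), f x := by
  rw [Set.inter_union_distrib_left]
  exact Summable.tsum_union_disjoint
    (hAB.mono Set.inter_subset_right Set.inter_subset_right)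
    (graft_aux_summable_inter hsum) (graft_aux_summable_inter hsum)

/-- If a family of sets shrinks away from every point as `h → 0⁺`, the sum of a summable
nonnegative family over it tends to `0`. -/
lemma graft_aux_tendsto_shrink (S : Set ℝ) (f : ℝ → ℝ) (hf : ∀ x ∈ S, 0 ≤ f x)
    (hsum : Summable fun x : S => f x) (I : ℝ → Set ℝ)
    (hI : ∀ x, ∀ᶠ h in nhdsWithin (0:ℝ) (Ioi 0), x ∉ I h) :
    Tendsto (fun h => ∑' x : ↥(S ∩ I h), f x) (nhdsWithin (0:ℝ) (Ioi 0)) (nhds 0) := by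
  set g := S.indicator f with hg_def
  have hg : Summable g := summable_subtype_iff_indicator.mp hsum
  have hg0 : ∀ x, 0 ≤ g x := Set.indicator_nonneg hf
  rw [NormedAddCommGroup.tendsto_nhds_zero]
  intro ε hε
  obtain ⟨F, hF⟩ : ∃ F : Finset ℝ, ∑' x : {x // x ∉ F}, g x < ε :=
    ((tendsto_tsum_compl_atTop_zero g).eventually (eventually_lt_nhds hε)).exists
  have hFcompl : ∑' x : {x // x ∉ F}, g x = ∑' x : ↥((↑F : Set ℝ)ᶜ), g x := by
    apply tsum_congr_set_coe
    ext x
    exact Iff.rfl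
  filter_upwards [(F.eventually_all).mpr (fun x _ => hI x)] with h hh
  have key : ∑' x : ↥(S ∩ I h), f x ≤ ∑' x : {x // x ∉ F}, g x := by
    rw [hFcompl, tsum_subtype, tsum_subtype]
    apply Summable.tsum_le_tsum
    · intro x
      by_cases hx : x ∈ S ∩ I h
      · rw [Set.indicator_of_mem hx]
        have hxF : x ∈ ((↑F : Set ℝ)ᶜ) := by
          intro hmem
          exact hh x (by simpa using hmem) hx.2
        rw [Set.indicator_of_mem hxF, hg_def, Set.indicator_of_mem hx.1]
      · rw [Set.indicator_of_notMem hx]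
        exact Set.indicator_nonneg (fun y _ => hg0 y) x
    · rw [show (S ∩ I h).indicator f = (I h).indicator g by
        rw [hg_def, Set.indicator_indicator, Set.inter_comm]]
      exact hg.indicator _
    · exact hg.indicator _
  have nn : 0 ≤ ∑' x : ↥(S ∩ I h), f x :=
    tsum_nonneg (fun x => hf x x.2.1)
  rw [Real.norm_eq_abs, abs_of_nonneg nn]
  exact lt_of_le_of_lt key hF

/-- For a grafting function `φ` with data `(X±, δ±)` and `t ∈ (0, s₀)`: `t ∈ X⁺` iff the
right jump `ω⁺(t) = lim_{h→0⁺} (φ(t+h) − φ(t))` is positive, in which case `δ⁺(t) = ω⁺(t)`;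
and `t ∈ X⁻` iff the left jump `ω⁻(t) = lim_{h→0⁺} (φ(t) − φ(t−h))` is positive, in which
case `δ⁻(t) = ω⁻(t)`. Hence the data is determined by `φ`. -/
theorem graftingData_jump_characterization
    (s₀ s₁ : ℝ) (φ : ℝ → ℝ) (Xp Xm : Set ℝ) (δp δm : ℝ → ℝ)
    (hdata : IsGraftingData s₀ s₁ φ Xp Xm δp δm)
    (t : ℝ) (ht : t ∈ Ioo 0 s₀) (ωp ωm : ℝ)
    (hωp : Tendsto (fun h : ℝ => φ (t + h) - φ t) (nhdsWithin 0 (Ioi 0)) (nhds ωp))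
    (hωm : Tendsto (fun h : ℝ => φ t - φ (t - h)) (nhdsWithin 0 (Ioi 0)) (nhds ωm)) :
    ((t ∈ Xp ↔ 0 < ωp) ∧ (t ∈ Xp → δp t = ωp)) ∧
      ((t ∈ Xm ↔ 0 < ωm) ∧ (t ∈ Xm → δm t = ωm)) := by
  classical
  obtain ⟨hXpc, hXmc, hXps, hXms, hδp, hδm, hsp, hsm, hφ, hmap⟩ := hdata
  obtain ⟨ht0, hts⟩ := ht
  have hδp0 : ∀ x ∈ Xp, 0 ≤ δp x := fun x hx => (hδp x hx).le
  have hδm0 : ∀ x ∈ Xm, 0 ≤ δm x := fun x hx => (hδm x hx).le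
  set indP : ℝ := if t ∈ Xp then δp t else 0 with hindP
  set indM : ℝ := if t ∈ Xm then δm t else 0 with hindM
  -- singleton sums
  have hsingP : ∑' x : ↥(Xp ∩ ({t} : Set ℝ)), δp x = indP := by
    by_cases h : t ∈ Xp
    · rw [hindP, if_pos h, show Xp ∩ ({t} : Set ℝ) = {t} by
        rw [Set.inter_eq_self_of_subset_right]; simpa using h]
      exact tsum_singleton t δp
    · rw [hindP, if_neg h, show Xp ∩ ({t} : Set ℝ) = ∅ by
        ext x; simp (config := {contextual := true}) [and_comm]
        rintro rfl; exact h]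
      simp
  have hsingM : ∑' x : ↥(Xm ∩ ({t} : Set ℝ)), δm x = indM := by
    by_cases h : t ∈ Xm
    · rw [hindM, if_pos h, show Xm ∩ ({t} : Set ℝ) = {t} by
        rw [Set.inter_eq_self_of_subset_right]; simpa using h]
      exact tsum_singleton t δm
    · rw [hindM, if_neg h, show Xm ∩ ({t} : Set ℝ) = ∅ by
        ext x; simp (config := {contextual := true}) [and_comm]
        rintro rfl; exact h]
      simp
  -- shrink lemmas applied to the four interval families
  have hI1 : ∀ x, ∀ᶠ h in nhdsWithin (0:ℝ) (Ioi 0), x ∉ Ioo t (t + h) := by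
    intro x
    rcases le_or_gt x t with hx | hx
    · exact Eventually.of_forall fun h hmem => absurd hmem.1 (not_lt.mpr hx)
    · filter_upwards [Ioo_mem_nhdsGT_of_mem
        (show (0:ℝ) ∈ Ico (0:ℝ) (x - t) from ⟨le_refl 0, sub_pos.mpr hx⟩)] with h hh hmem
      have := hmem.2; have := hh.2; linarith
  have hI2 : ∀ x, ∀ᶠ h in nhdsWithin (0:ℝ) (Ioi 0), x ∉ Ioc t (t + h) := by
    intro x
    rcases le_or_gt x t with hx | hx
    · exact Eventually.of_forall fun h hmem => absurd hmem.1 (not_lt.mpr hx)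
    · filter_upwards [Ioo_mem_nhdsGT_of_mem
        (show (0:ℝ) ∈ Ico (0:ℝ) (x - t) from ⟨le_refl 0, sub_pos.mpr hx⟩)] with h hh hmem
      have := hmem.2; have := hh.2; linarith
  have hI3 : ∀ x, ∀ᶠ h in nhdsWithin (0:ℝ) (Ioi 0), x ∉ Ico (t - h) t := by
    intro x
    rcases le_or_gt t x with hx | hx
    · exact Eventually.of_forall fun h hmem => absurd hmem.2 (not_lt.mpr hx)
    · filter_upwards [Ioo_mem_nhdsGT_of_mem
        (show (0:ℝ) ∈ Ico (0:ℝ) (t - x) from ⟨le_refl 0, sub_pos.mpr hx⟩)] with h hh hmem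
      have := hmem.1; have := hh.2; linarith
  have hI4 : ∀ x, ∀ᶠ h in nhdsWithin (0:ℝ) (Ioi 0), x ∉ Ioo (t - h) t := by
    intro x
    rcases le_or_gt t x with hx | hx
    · exact Eventually.of_forall fun h hmem => absurd hmem.2 (not_lt.mpr hx)
    · filter_upwards [Ioo_mem_nhdsGT_of_mem
        (show (0:ℝ) ∈ Ico (0:ℝ) (t - x) from ⟨le_refl 0, sub_pos.mpr hx⟩)] with h hh hmem
      have := hmem.1; have := hh.2; linarith
  have tendA : Tendsto (fun h => ∑' x : ↥(Xp ∩ Ioo t (t + h)), δp x)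
      (nhdsWithin (0:ℝ) (Ioi 0)) (nhds 0) :=
    graft_aux_tendsto_shrink Xp δp hδp0 hsp _ hI1
  have tendB : Tendsto (fun h => ∑' x : ↥(Xm ∩ Ioc t (t + h)), δm x)
      (nhdsWithin (0:ℝ) (Ioi 0)) (nhds 0) :=
    graft_aux_tendsto_shrink Xm δm hδm0 hsm _ hI2
  have tendA' : Tendsto (fun h => ∑' x : ↥(Xp ∩ Ico (t - h) t), δp x)
      (nhdsWithin (0:ℝ) (Ioi 0)) (nhds 0) :=
    graft_aux_tendsto_shrink Xp δp hδp0 hsp _ hI3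
  have tendB' : Tendsto (fun h => ∑' x : ↥(Xm ∩ Ioo (t - h) t), δm x)
      (nhdsWithin (0:ℝ) (Ioi 0)) (nhds 0) :=
    graft_aux_tendsto_shrink Xm δm hδm0 hsm _ hI4
  have tendId : Tendsto (fun h : ℝ => h) (nhdsWithin (0:ℝ) (Ioi 0)) (nhds 0) :=
    tendsto_id.mono_left nhdsWithin_le_nhds
  have htIcc : t ∈ Icc 0 s₀ := ⟨ht0.le, hts.le⟩
  -- right-jump identity
  have hsplitR : ∀ h ∈ Ioo (0:ℝ) (s₀ - t),
      φ (t + h) - φ t = h + indP + (∑' x : ↥(Xp ∩ Ioo t (t + h)), δp x)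
        + ∑' x : ↥(Xm ∩ Ioc t (t + h)), δm x := by
    intro h hh
    have hth : t + h ∈ Icc 0 s₀ := ⟨by linarith [hh.1], by linarith [hh.2]⟩
    have e1 : Iio (t + h) = Iio t ∪ (({t} : Set ℝ) ∪ Ioo t (t + h)) := by
      ext x
      simp only [Set.mem_Iio, Set.mem_union, Set.mem_singleton_iff, Set.mem_Ioo]
      constructor
      · intro hx
        rcases lt_trichotomy x t with h' | h' | h'
        · exact Or.inl h'
        · exact Or.inr (Or.inl h')
        · exact Or.inr (Or.inr ⟨h', hx⟩)
      · rintro (h' | h' | h')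
        · linarith [hh.1]
        · rw [h']; linarith [hh.1]
        · exact h'.2
    have e2 : Iic (t + h) = Iic t ∪ Ioc t (t + h) :=
      (Set.Iic_union_Ioc_eq_Iic (by linarith [hh.1])).symm
    have d1 : Disjoint (Iio t) (({t} : Set ℝ) ∪ Ioo t (t + h)) := by
      rw [Set.disjoint_left]
      rintro x hx (h' | h')
      · simp only [Set.mem_Iio] at hx
        simp only [Set.mem_singleton_iff] at h'
        rw [h'] at hx; exact lt_irrefl t hx
      · exact absurd h'.1 (not_lt.mpr (le_of_lt hx))
    have d2 : Disjoint ({t} : Set ℝ) (Ioo t (t + h)) := by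
      rw [Set.disjoint_left]
      rintro x hx h'
      simp only [Set.mem_singleton_iff] at hx
      rw [hx] at h'; exact lt_irrefl t h'.1
    have d3 : Disjoint (Iic t) (Ioc t (t + h)) := by
      rw [Set.disjoint_left]
      intro x hx h'
      exact absurd h'.1 (not_lt.mpr hx)
    rw [hφ (t + h) hth, hφ t htIcc, e1, e2,
      graft_aux_tsum_split d1 hsp, graft_aux_tsum_split d2 hsp,
      graft_aux_tsum_split d3 hsm, hsingP]
    ring
  -- left-jump identity
  have hsplitL : ∀ h ∈ Ioo (0:ℝ) t,
      φ t - φ (t - h) = h + indM + (∑' x : ↥(Xp ∩ Ico (t - h) t), δp x)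
        + ∑' x : ↥(Xm ∩ Ioo (t - h) t), δm x := by
    intro h hh
    have hth : t - h ∈ Icc 0 s₀ := ⟨by linarith [hh.2], by linarith [hh.1]⟩
    have e1 : Iio t = Iio (t - h) ∪ Ico (t - h) t :=
      (Set.Iio_union_Ico_eq_Iio (by linarith [hh.1])).symm
    have e2 : Iic t = Iic (t - h) ∪ (Ioo (t - h) t ∪ ({t} : Set ℝ)) := by
      ext x
      simp only [Set.mem_Iic, Set.mem_union, Set.mem_singleton_iff, Set.mem_Ioo]
      constructor
      · intro hx
        rcases le_or_gt x (t - h) with h' | h'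
        · exact Or.inl h'
        · rcases eq_or_lt_of_le hx with h'' | h''
          · exact Or.inr (Or.inr h'')
          · exact Or.inr (Or.inl ⟨h', h''⟩)
      · rintro (h' | h' | h')
        · linarith [hh.1]
        · exact h'.2.le
        · exact le_of_eq h'
    have d1 : Disjoint (Iio (t - h)) (Ico (t - h) t) := by
      rw [Set.disjoint_left]
      intro x hx h'
      exact absurd h'.1 (not_le.mpr hx)
    have d2 : Disjoint (Ioo (t - h) t) ({t} : Set ℝ) := by
      rw [Set.disjoint_left]
      rintro x hx h'
      simp only [Set.mem_singleton_iff] at h'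
      rw [h'] at hx; exact lt_irrefl t hx.2
    have d3 : Disjoint (Iic (t - h)) (Ioo (t - h) t ∪ ({t} : Set ℝ)) := by
      rw [Set.disjoint_left]
      rintro x hx (h' | h')
      · exact absurd h'.1 (not_lt.mpr hx)
      · simp only [Set.mem_singleton_iff] at h'
        rw [h'] at hx
        simp only [Set.mem_Iic] at hx
        linarith [hh.1]
    rw [hφ t htIcc, hφ (t - h) hth, e1, e2,
      graft_aux_tsum_split d1 hsp,
      graft_aux_tsum_split d3 hsm, graft_aux_tsum_split d2 hsm, hsingM]
    ring
  -- identify the limits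
  have hmemR : Ioo (0:ℝ) (s₀ - t) ∈ nhdsWithin (0:ℝ) (Ioi 0) :=
    Ioo_mem_nhdsGT_of_mem ⟨le_refl 0, by linarith⟩
  have hmemL : Ioo (0:ℝ) t ∈ nhdsWithin (0:ℝ) (Ioi 0) :=
    Ioo_mem_nhdsGT_of_mem ⟨le_refl 0, ht0⟩
  have tendR : Tendsto (fun h : ℝ => φ (t + h) - φ t)
      (nhdsWithin (0:ℝ) (Ioi 0)) (nhds indP) := by
    have := ((tendId.add (tendsto_const_nhds (x := indP))).add tendA).add tendB
    simp only [zero_add, add_zero] at this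
    exact this.congr' (by filter_upwards [hmemR] with h hh; exact (hsplitR h hh).symm)
  have tendL : Tendsto (fun h : ℝ => φ t - φ (t - h))
      (nhdsWithin (0:ℝ) (Ioi 0)) (nhds indM) := by
    have := ((tendId.add (tendsto_const_nhds (x := indM))).add tendA').add tendB'
    simp only [zero_add, add_zero] at this
    exact this.congr' (by filter_upwards [hmemL] with h hh; exact (hsplitL h hh).symm)
  have hp : ωp = indP := tendsto_nhds_unique hωp tendR
  have hm : ωm = indM := tendsto_nhds_unique hωm tendL
  constructor
  · constructor
    · constructor
      · intro h
        rw [hp, hindP, if_pos h]; exact hδp t h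
      · intro h
        rw [hp, hindP] at h
        by_contra h'
        rw [if_neg h'] at h; exact lt_irrefl 0 h
    · intro h
      rw [hp, hindP, if_pos h]
  · constructor
    · constructor
      · intro h
        rw [hm, hindM, if_pos h]; exact hδm t h
      · intro h
        rw [hm, hindM] at h
        by_contra h'
        rw [if_neg h'] at h; exact lt_irrefl 0 h
    · intro h
      rw [hm, hindM, if_pos h]
end

section
/- Let f(t) = arcsin(cos ρ_0 · sin t) for a fixed ρ_0 with 0 < ρ_0 ≤ π/2. If λ_2, λ_4, λ_6 ∈ [0, π/2] satisfy λ_2 + λ_4 + λ_6 = π, then f(λ_2) + f(λ_4) + f(λ_6) ≥ π − 2ρ_0. -/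
open Real Set

theorem aux_concave (c : ℝ) (hc0 : 0 ≤ c) (hc1 : c < 1) :
    ConcaveOn ℝ (Icc 0 (π/2)) (fun t => arcsin (c * sin t)) := by
  have hd : ∀ t : ℝ, HasDerivAt (fun t => arcsin (c * sin t))
      (1 / √(1 - (c * sin t)^2) * (c * cos t)) t := by
    intro t
    have h1 : c * sin t ≠ -1 := by nlinarith [neg_one_le_sin t, sin_le_one t]
    have h2 : c * sin t ≠ 1 := by nlinarith [neg_one_le_sin t, sin_le_one t]
    exact (hasDerivAt_arcsin h1 h2).comp t ((hasDerivAt_sin t).const_mul c)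
  have hderiv : ∀ t : ℝ, deriv (fun t => arcsin (c * sin t)) t
      = 1 / √(1 - (c * sin t)^2) * (c * cos t) := fun t => (hd t).deriv
  apply AntitoneOn.concaveOn_of_deriv (convex_Icc _ _)
  · exact fun t _ => (hd t).continuousAt.continuousWithinAt
  · exact fun t _ => (hd t).differentiableAt.differentiableWithinAt
  · rw [interior_Icc]
    intro x hx y hy hxy
    rw [hderiv, hderiv]
    have hsx : 0 ≤ sin x := sin_nonneg_of_nonneg_of_le_pi hx.1.le (by linarith [hx.2, pi_pos])
    have hsy1 : sin y ≤ 1 := sin_le_one y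
    have hsxy : sin x ≤ sin y := by
      apply sin_le_sin_of_le_of_le_pi_div_two (by linarith [hx.1, pi_pos]) hy.2.le hxy
    have hsy0 : 0 ≤ sin y := hsx.trans hsxy
    have hsx1 : sin x ≤ 1 := sin_le_one x
    have hx0 : 0 ≤ c * sin x := mul_nonneg hc0 hsx
    have hx1 : c * sin x < 1 := lt_of_le_of_lt (mul_le_of_le_one_right hc0 hsx1) hc1
    have hy0 : 0 ≤ c * sin y := mul_nonneg hc0 hsy0
    have hy1 : c * sin y < 1 := lt_of_le_of_lt (mul_le_of_le_one_right hc0 hsy1) hc1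
    have hAx : 0 < 1 - (c * sin x)^2 := by nlinarith
    have hAy : 0 < 1 - (c * sin y)^2 := by nlinarith
    have hcx : 0 ≤ cos x := cos_nonneg_of_mem_Icc ⟨by linarith [hx.1, pi_pos], hx.2.le⟩
    have hcy : 0 ≤ cos y := cos_nonneg_of_mem_Icc ⟨by linarith [hy.1, pi_pos], hy.2.le⟩
    rw [one_div_mul_eq_div, one_div_mul_eq_div,
      div_le_div_iff₀ (sqrt_pos.2 hAy) (sqrt_pos.2 hAx)]
    have h1 : c * cos y * √(1 - (c * sin x)^2) = √((c * cos y)^2 * (1 - (c * sin x)^2)) := by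
      rw [sqrt_mul (by positivity), sqrt_sq (by positivity)]
    have h2 : c * cos x * √(1 - (c * sin y)^2) = √((c * cos x)^2 * (1 - (c * sin y)^2)) := by
      rw [sqrt_mul (by positivity), sqrt_sq (by positivity)]
    rw [h1, h2]
    apply sqrt_le_sqrt
    have ex : cos x ^ 2 = 1 - sin x ^ 2 := by linarith [sin_sq_add_cos_sq x]
    have ey : cos y ^ 2 = 1 - sin y ^ 2 := by linarith [sin_sq_add_cos_sq y]
    have key : 0 ≤ c^2 * ((sin y ^ 2 - sin x ^ 2) * (1 - c^2)) := by
      apply mul_nonneg (sq_nonneg c)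
      apply mul_nonneg (by nlinarith) (by nlinarith)
    have expand : (c * cos x) ^ 2 * (1 - (c * sin y) ^ 2)
        - (c * cos y) ^ 2 * (1 - (c * sin x) ^ 2)
        = c^2 * ((sin y ^ 2 - sin x ^ 2) * (1 - c^2)) := by
      rw [mul_pow c (cos x), mul_pow c (cos y), ex, ey]; ring
    linarith [key, expand]

theorem aux_chord (c : ℝ) (hc0 : 0 ≤ c) (hc1 : c < 1) (t : ℝ) (ht : t ∈ Icc 0 (π/2)) :
    2 * t / π * arcsin c ≤ arcsin (c * sin t) := by
  have hπ : 0 < π := pi_pos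
  have h0 : (0:ℝ) ∈ Icc 0 (π/2) := ⟨le_refl 0, by linarith⟩
  have h1 : (π/2 : ℝ) ∈ Icc 0 (π/2) := ⟨by linarith, le_refl _⟩
  have ha : 0 ≤ 1 - 2 * t / π := by
    rw [sub_nonneg, div_le_one hπ]; linarith [ht.2]
  have hb : 0 ≤ 2 * t / π := div_nonneg (by linarith [ht.1]) hπ.le
  have hab : (1 - 2 * t / π) + 2 * t / π = 1 := by ring
  have := (aux_concave c hc0 hc1).2 h0 h1 ha hb hab
  simp only [smul_eq_mul, mul_zero, sin_zero, arcsin_zero, zero_add, sin_pi_div_two,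
    mul_one] at this
  have ht' : 2 * t / π * (π / 2) = t := by field_simp
  rw [ht'] at this
  exact this

/-- If `λ₂ + λ₄ + λ₆ = π` with each `λᵢ ∈ [0, π/2]` and `0 < ρ₀ ≤ π/2`, then
`arcsin(cos ρ₀ sin λ₂) + arcsin(cos ρ₀ sin λ₄) + arcsin(cos ρ₀ sin λ₆) ≥ π − 2ρ₀`. -/
theorem arcsin_cos_sin_sum_ge
    (ρ₀ l₂ l₄ l₆ : ℝ)
    (hρ₀ : 0 < ρ₀) (hρ₀' : ρ₀ ≤ π / 2)
    (h₂ : l₂ ∈ Set.Icc 0 (π / 2)) (h₄ : l₄ ∈ Set.Icc 0 (π / 2))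
    (h₆ : l₆ ∈ Set.Icc 0 (π / 2))
    (hsum : l₂ + l₄ + l₆ = π) :
    π - 2 * ρ₀ ≤
      arcsin (cos ρ₀ * sin l₂) + arcsin (cos ρ₀ * sin l₄) + arcsin (cos ρ₀ * sin l₆) := by
  have hπ : 0 < π := pi_pos
  set c := cos ρ₀ with hc
  have hc0 : 0 ≤ c := cos_nonneg_of_mem_Icc ⟨by linarith, hρ₀'⟩
  have hc1 : c < 1 := by
    have := cos_lt_cos_of_nonneg_of_le_pi (le_refl 0) (by linarith) hρ₀
    simpa using this
  have harc : arcsin c = π / 2 - ρ₀ := by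
    rw [hc, ← sin_pi_div_two_sub]
    exact arcsin_sin (by linarith) (by linarith)
  have b₂ := aux_chord c hc0 hc1 l₂ h₂
  have b₄ := aux_chord c hc0 hc1 l₄ h₄
  have b₆ := aux_chord c hc0 hc1 l₆ h₆
  have key : 2 * l₂ / π * arcsin c + 2 * l₄ / π * arcsin c + 2 * l₆ / π * arcsin c
      = π - 2 * ρ₀ := by
    rw [harc]
    field_simp
    nlinarith [hsum]
  linarith
end
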